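/- Let P₁ = Beta(y+1, n−y+1) and P₂ = Beta(α+y, β+n−y) with α, β > 0 and 0 ≤ y ≤ n. Then d_W(P₁,P₂) ≥ |((y+1)/(n+2)) · ((α+β−2)/(n+α+β)) − (α−1)/(n+α+β)|. -/

import Mathlib

open MeasureTheory Set

noncomputable def myB (a b : ℝ) : ℝ := ∫ t in Ioo (0:ℝ) 1, t ^ (a - 1) * (1 - t) ^ (b - 1)

lemma myB_complex (a b : ℝ) : Complex.betaIntegral a b = (myB a b : ℂ) := by
  rw [Complex.betaIntegral, intervalIntegral.integral_of_le zero_le_one,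
    MeasureTheory.integral_Ioc_eq_integral_Ioo]
  rw [show ((myB a b : ℝ) : ℂ) = ∫ t in Ioo (0:ℝ) 1,
      ((t ^ (a - 1) * (1 - t) ^ (b - 1) : ℝ) : ℂ) from (integral_ofReal).symm]
  refine setIntegral_congr_fun measurableSet_Ioo fun x hx => ?_
  rw [Complex.ofReal_mul, Complex.ofReal_cpow hx.1.le,
    Complex.ofReal_cpow (by linarith [hx.2] : (0:ℝ) ≤ 1 - x)]
  push_cast
  ring

lemma myB_eq {a b : ℝ} (ha : 0 < a) (hb : 0 < b) :
    myB a b = Real.Gamma a * Real.Gamma b / Real.Gamma (a + b) := by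
  have h := Complex.Gamma_mul_Gamma_eq_betaIntegral
    (by simpa using ha : 0 < (a:ℂ).re) (by simpa using hb : 0 < (b:ℂ).re)
  rw [myB_complex] at h
  have hcast : ((a:ℂ) + b) = ((a + b : ℝ) : ℂ) := by push_cast; ring
  rw [hcast, Complex.Gamma_ofReal, Complex.Gamma_ofReal, Complex.Gamma_ofReal] at h
  have hG := (Real.Gamma_pos_of_pos (by linarith : 0 < a + b)).ne'
  have h' : Real.Gamma a * Real.Gamma b = Real.Gamma (a + b) * myB a b := by exact_mod_cast h
  field_simp [h']
  linarith [h']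

lemma myB_pos {a b : ℝ} (ha : 0 < a) (hb : 0 < b) : 0 < myB a b := by
  rw [myB_eq ha hb]
  have := Real.Gamma_pos_of_pos ha
  have := Real.Gamma_pos_of_pos hb
  have := Real.Gamma_pos_of_pos (by linarith : 0 < a + b)
  positivity

lemma myB_succ {a b : ℝ} (ha : 0 < a) (hb : 0 < b) :
    myB (a + 1) b = a / (a + b) * myB a b := by
  rw [myB_eq (by linarith) hb, myB_eq ha hb, Real.Gamma_add_one ha.ne',
    show a + 1 + b = (a + b) + 1 by ring, Real.Gamma_add_one (by positivity : a + b ≠ 0)]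
  have h1 := (Real.Gamma_pos_of_pos (by linarith : 0 < a + b)).ne'
  have h2 : a + b ≠ 0 := by positivity
  field_simp

lemma integral_id_beta (a b : ℝ) (ha : 0 < a) (hb : 0 < b) :
    ∫ x, x ∂(volume.withDensity (fun x => ENNReal.ofReal
      (if x ∈ Ioo (0:ℝ) 1 then (∫ t in Ioo (0:ℝ) 1, t ^ (a - 1) * (1 - t) ^ (b - 1))⁻¹
          * x ^ (a - 1) * (1 - x) ^ (b - 1) else 0))) = a / (a + b) := by
  have hBpos := myB_pos ha hb
  set pdf : ℝ → ℝ := fun x => if x ∈ Ioo (0:ℝ) 1 then (myB a b)⁻¹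
      * x ^ (a - 1) * (1 - x) ^ (b - 1) else 0 with hpdf
  have hmeas : Measurable pdf := by
    apply Measurable.ite measurableSet_Ioo _ measurable_const
    fun_prop
  have hnonneg : ∀ x, 0 ≤ pdf x := by
    intro x
    rw [hpdf]
    dsimp only
    split_ifs with h
    · have h1 : (0:ℝ) ≤ x := h.1.le
      have h2 : (0:ℝ) ≤ 1 - x := by linarith [h.2]
      positivity
    · exact le_refl 0
  have key : (fun x => ENNReal.ofReal (if x ∈ Ioo (0:ℝ) 1 then
      (∫ t in Ioo (0:ℝ) 1, t ^ (a - 1) * (1 - t) ^ (b - 1))⁻¹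
          * x ^ (a - 1) * (1 - x) ^ (b - 1) else 0))
      = fun x => ((pdf x).toNNReal : ENNReal) := rfl
  rw [key, integral_withDensity_eq_integral_smul (by fun_prop) (fun x => x)]
  have hind : (fun x => (pdf x).toNNReal • x) = (Ioo (0:ℝ) 1).indicator
      (fun x => (myB a b)⁻¹ * (x ^ ((a + 1) - 1) * (1 - x) ^ (b - 1))) := by
    funext x
    rw [NNReal.smul_def, Real.coe_toNNReal _ (hnonneg x), smul_eq_mul]
    by_cases h : x ∈ Ioo (0:ℝ) 1
    · rw [indicator_of_mem h, hpdf]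
      simp only [if_pos h]
      rw [show (a + 1) - 1 = (a - 1) + 1 by ring, Real.rpow_add h.1, Real.rpow_one]
      ring
    · rw [indicator_of_notMem h, hpdf]
      simp only [if_neg h, zero_mul]
  rw [hind, integral_indicator measurableSet_Ioo, integral_const_mul]
  have : (∫ x in Ioo (0:ℝ) 1, x ^ ((a + 1) - 1) * (1 - x) ^ (b - 1)) = myB (a + 1) b := rfl
  rw [this, myB_succ ha hb]
  field_simp

/-- Lower bound on the Wasserstein distance between the binomial posteriors
`Beta(y+1, n−y+1)` (uniform prior) and `Beta(α+y, β+n−y)` (Beta prior). -/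
theorem wasserstein_beta_posteriors_lower_bound
    (α β : ℝ) (hα : 0 < α) (hβ : 0 < β)
    (n y : ℕ) (hn : 1 ≤ n) (hy : y ≤ n)
    (betaPdf : ℝ → ℝ → ℝ → ℝ)
    (hbeta : betaPdf = fun a b x => if x ∈ Ioo (0:ℝ) 1 then
        (∫ t in Ioo (0:ℝ) 1, t ^ (a - 1) * (1 - t) ^ (b - 1))⁻¹
          * x ^ (a - 1) * (1 - x) ^ (b - 1) else 0)
    (P₁ P₂ : Measure ℝ)
    (hP₁ : P₁ = volume.withDensity
        (fun x => ENNReal.ofReal (betaPdf ((y : ℝ) + 1) ((n : ℝ) - y + 1) x)))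
    (hP₂ : P₂ = volume.withDensity
        (fun x => ENNReal.ofReal (betaPdf (α + y) (β + n - y) x)))
    (W : ℝ)
    (hW : IsLUB {d : ℝ | ∃ h : ℝ → ℝ, LipschitzWith 1 h ∧
        d = |(∫ x, h x ∂P₂) - ∫ x, h x ∂P₁|} W) :
    |((y : ℝ) + 1) / (n + 2) * ((α + β - 2) / (n + α + β))
        - (α - 1) / (n + α + β)| ≤ W := by
  have hyn : (y : ℝ) ≤ n := by exact_mod_cast hy
  have ha1 : (0:ℝ) < (y : ℝ) + 1 := by positivity
  have hb1 : (0:ℝ) < (n : ℝ) - y + 1 := by linarith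
  have ha2 : 0 < α + y := by positivity
  have hb2 : 0 < β + (n : ℝ) - y := by linarith
  have E1 : (∫ x, x ∂P₁) = ((y:ℝ) + 1) / (((y:ℝ) + 1) + ((n:ℝ) - y + 1)) := by
    rw [hP₁, hbeta]
    exact integral_id_beta _ _ ha1 hb1
  have E2 : (∫ x, x ∂P₂) = (α + y) / ((α + y) + (β + (n:ℝ) - y)) := by
    rw [hP₂, hbeta]
    exact integral_id_beta _ _ ha2 hb2
  have hmem : |(∫ x, x ∂P₂) - ∫ x, x ∂P₁| ∈ {d : ℝ | ∃ h : ℝ → ℝ, LipschitzWith 1 h ∧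
      d = |(∫ x, h x ∂P₂) - ∫ x, h x ∂P₁|} := ⟨fun x => x, LipschitzWith.id, rfl⟩
  have hle := hW.1 hmem
  refine le_trans (le_of_eq ?_) hle
  rw [E1, E2, abs_sub_comm]
  have hd1 : ((y:ℝ) + 1) + ((n:ℝ) - y + 1) ≠ 0 := by linarith
  have hd2 : (α + y) + (β + (n:ℝ) - y) ≠ 0 := by linarith
  have hd3 : (n:ℝ) + 2 ≠ 0 := by linarith
  have hd4 : (n:ℝ) + α + β ≠ 0 := by linarith
  congr 1
  field_simp
  ring
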